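/- If H is the K_1-corona of a finite simple graph G with vertex set {X_1,...,X_d}, then the closed neighborhood ideal N_H is a complete intersection: it is generated by the regular sequence X_1Y_1, X_2Y_2, ..., X_dY_d in K[X_1,...,X_d,Y_1,...,Y_d]. -/

import Mathlib

open scoped Classical in
/-- The closed neighborhood ideal of a finite simple graph `G`, generated in
`K[X_v : v ∈ V]` by the products of the variables in the closed neighborhoods of the
vertices. -/
noncomputable def nbhdIdeal {V : Type*} [Fintype V] (K : Type*) [Field K]
    (G : SimpleGraph V) : Ideal (MvPolynomial V K) :=
  Ideal.span { m | ∃ i : V,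
    m = ∏ j ∈ (insert i {j | G.Adj i j} : Set V).toFinset, MvPolynomial.X j }

/-- The `K₁`-corona of `G`: add to `G` a pendant vertex (whisker) attached to each
vertex of `G`.  The original vertices are `Sum.inl i` and the whisker vertices are
`Sum.inr i`. -/
def corona {V : Type*} (G : SimpleGraph V) : SimpleGraph (V ⊕ V) where
  Adj a b :=
    (∃ i j, a = Sum.inl i ∧ b = Sum.inl j ∧ G.Adj i j) ∨
    (∃ i, a = Sum.inl i ∧ b = Sum.inr i) ∨
    (∃ i, a = Sum.inr i ∧ b = Sum.inl i)
  symm := by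
    constructor
    rintro a b (⟨i, j, rfl, rfl, h⟩ | ⟨i, rfl, rfl⟩ | ⟨i, rfl, rfl⟩)
    · exact Or.inl ⟨j, i, rfl, rfl, h.symm⟩
    · exact Or.inr (Or.inr ⟨i, rfl, rfl⟩)
    · exact Or.inr (Or.inl ⟨i, rfl, rfl⟩)
  loopless := by
    constructor
    rintro a (⟨i, j, rfl, h1, h⟩ | ⟨i, rfl, h1⟩ | ⟨i, rfl, h1⟩)
    · obtain rfl := Sum.inl_injective h1
      exact G.loopless.irrefl i h
    · exact Sum.inl_ne_inr h1
    · exact Sum.inr_ne_inl h1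

/-- `rs` is a regular sequence in `R`: it generates a proper ideal and each entry is a
nonzerodivisor modulo the ideal generated by the preceding entries. -/
def IsRegSeq {R : Type*} [CommRing R] (rs : List R) : Prop :=
  Ideal.span {x | x ∈ rs} ≠ ⊤ ∧
  ∀ i : Fin rs.length, ∀ y : R,
    rs.get i * y ∈ Ideal.span {x | x ∈ rs.take i.1} →
      y ∈ Ideal.span {x | x ∈ rs.take i.1}


open MvPolynomial

noncomputable def expE (d : ℕ) (i : Fin d) : (Fin d ⊕ Fin d) →₀ ℕ :=
  Finsupp.single (Sum.inl i) 1 + Finsupp.single (Sum.inr i) 1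

lemma expE_ne_zero (d : ℕ) (i : Fin d) : expE d i ≠ 0 := by
  intro h
  have : expE d i (Sum.inl i) = 0 := by rw [h]; rfl
  simp [expE, Finsupp.single_apply] at this

lemma expE_disj {d : ℕ} {i j : Fin d} (h : i ≠ j) (a : Fin d ⊕ Fin d) :
    expE d i a = 0 ∨ expE d j a = 0 := by
  rcases a with x | x <;>
  · by_cases hx : x = i
    · subst hx
      right; simp [expE, Finsupp.single_apply, Ne.symm h, h]
    · left; simp [expE, Finsupp.single_apply, hx, Ne.symm hx]

lemma expE_le_of_le_add {d : ℕ} {i j : Fin d} (h : j ≠ i) {xi : (Fin d ⊕ Fin d) →₀ ℕ}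
    (hle : expE d j ≤ xi + expE d i) : expE d j ≤ xi := by
  intro a
  have h1 := hle a
  rcases expE_disj h a with h2 | h2
  · simp [h2]
  · simpa [Finsupp.add_apply, h2] using h1

lemma X_mul_X_eq (d : ℕ) (K : Type*) [Field K] (i : Fin d) :
    (X (Sum.inl i) * X (Sum.inr i) : MvPolynomial (Fin d ⊕ Fin d) K) =
      monomial (expE d i) 1 := by
  rw [X, X, monomial_mul, one_mul]; rfl

lemma mem_finRange_take {d k : ℕ} {j : Fin d} :
    j ∈ (List.finRange d).take k ↔ (j : ℕ) < k := by
  rw [List.mem_take_iff_getElem]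
  constructor
  · rintro ⟨m, hm, rfl⟩
    simpa using lt_of_lt_of_le hm (min_le_left _ _)
  · intro h
    exact ⟨j, by simp [j.2, h], by simp⟩

lemma prod_dvd_mem {d : ℕ} {K : Type*} [Field K] (i : Fin d) (t : Finset (Fin d ⊕ Fin d))
    (h1 : Sum.inl i ∈ t) (h2 : Sum.inr i ∈ t)
    {I : Ideal (MvPolynomial (Fin d ⊕ Fin d) K)}
    (hI : (X (Sum.inl i) * X (Sum.inr i) : MvPolynomial (Fin d ⊕ Fin d) K) ∈ I) :
    (∏ j ∈ t, X j : MvPolynomial (Fin d ⊕ Fin d) K) ∈ I := by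
  have h2' : Sum.inr i ∈ t.erase (Sum.inl i) := Finset.mem_erase.2 ⟨by simp, h2⟩
  rw [← Finset.mul_prod_erase _ _ h1, ← Finset.mul_prod_erase _ _ h2', ← mul_assoc]
  exact Ideal.mul_mem_right _ _ hI

lemma prod_eq_pair {d : ℕ} {K : Type*} [Field K] (i : Fin d) (t : Finset (Fin d ⊕ Fin d))
    (ht : ∀ a, a ∈ t ↔ a = Sum.inr i ∨ a = Sum.inl i) :
    (∏ j ∈ t, X j : MvPolynomial (Fin d ⊕ Fin d) K) = X (Sum.inl i) * X (Sum.inr i) := by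
  have h : t = {Sum.inr i, Sum.inl i} := Finset.ext (by simp [ht])
  rw [h, Finset.prod_pair (by simp), mul_comm]


/-- The closed neighborhood ideal of the `K₁`-corona `H` of a graph `G` on `d` vertices
is a complete intersection: it is generated by the regular sequence
`X₁Y₁, X₂Y₂, …, X_dY_d`. -/
theorem stmt8 (d : ℕ) (K : Type*) [Field K] (G : SimpleGraph (Fin d)) :
    IsRegSeq ((List.finRange d).map fun i =>
      (MvPolynomial.X (Sum.inl i) * MvPolynomial.X (Sum.inr i) :
        MvPolynomial (Fin d ⊕ Fin d) K)) ∧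
    nbhdIdeal K (corona G) =
      Ideal.span {x | x ∈ (List.finRange d).map fun i =>
        (MvPolynomial.X (Sum.inl i) * MvPolynomial.X (Sum.inr i) :
          MvPolynomial (Fin d ⊕ Fin d) K)} := by
  classical
  set f : Fin d → MvPolynomial (Fin d ⊕ Fin d) K :=
    fun i => X (Sum.inl i) * X (Sum.inr i) with hf
  set rs : List (MvPolynomial (Fin d ⊕ Fin d) K) := (List.finRange d).map f with hrs
  have hset : ∀ k : ℕ, ({x | x ∈ rs.take k} : Set (MvPolynomial (Fin d ⊕ Fin d) K)) =
      (fun s => monomial s (1 : K)) '' {s | ∃ j : Fin d, (j : ℕ) < k ∧ s = expE d j} := by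
    intro k
    ext x
    simp only [Set.mem_setOf_eq, hrs, ← List.map_take, List.mem_map, Set.mem_image]
    constructor
    · rintro ⟨j, hj, rfl⟩
      exact ⟨expE d j, ⟨j, mem_finRange_take.1 hj, rfl⟩, (X_mul_X_eq d K j).symm⟩
    · rintro ⟨s, ⟨j, hj, rfl⟩, rfl⟩
      exact ⟨j, mem_finRange_take.2 hj, X_mul_X_eq d K j⟩
  have hfull : ({x | x ∈ rs} : Set (MvPolynomial (Fin d ⊕ Fin d) K)) = {x | x ∈ rs.take d} := by
    rw [show rs.take d = rs from by simp [hrs, List.take_of_length_le]]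
  have hfmem : ∀ i : Fin d, f i ∈ ({x | x ∈ rs} : Set (MvPolynomial (Fin d ⊕ Fin d) K)) :=
    fun i => List.mem_map.2 ⟨i, List.mem_finRange i, rfl⟩
  constructor
  · constructor
    · intro htop
      have h1 : (1 : MvPolynomial (Fin d ⊕ Fin d) K) ∈ Ideal.span {x | x ∈ rs} :=
        (Ideal.eq_top_iff_one _).1 htop
      rw [hfull, hset d, mem_ideal_span_monomial_image] at h1
      obtain ⟨si, ⟨j, _, rfl⟩, hle⟩ := h1 0 (by rw [mem_support_iff]; simp)
      exact expE_ne_zero d j (le_antisymm hle (zero_le))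
    · intro i y hy
      have hi2 : (i : ℕ) < d := by simpa [hrs] using i.2
      have hget : rs.get i = f ⟨(i : ℕ), hi2⟩ := by
        simp [hrs, List.get_eq_getElem, List.getElem_map, List.getElem_finRange, Fin.cast]
      rw [hset i.1, mem_ideal_span_monomial_image] at hy ⊢
      intro xi hxi
      have hfm : f ⟨(i : ℕ), hi2⟩ = monomial (expE d ⟨(i : ℕ), hi2⟩) (1 : K) :=
        X_mul_X_eq d K _
      have hm : xi + expE d ⟨(i : ℕ), hi2⟩ ∈ (rs.get i * y).support := by
        rw [mem_support_iff, hget, hfm, mul_comm, coeff_mul_monomial, mul_one]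
        exact mem_support_iff.1 hxi
      obtain ⟨si, ⟨j, hj, rfl⟩, hle⟩ := hy _ hm
      refine ⟨expE d j, ⟨j, hj, rfl⟩, expE_le_of_le_add ?_ hle⟩
      intro he
      rw [he] at hj
      exact absurd hj (by simp)
  · have hadj : ∀ (i : Fin d) (a : Fin d ⊕ Fin d),
        (corona G).Adj (Sum.inr i) a ↔ a = Sum.inl i := by
      intro i a
      constructor
      · rintro (⟨p, q, h, -, -⟩ | ⟨p, h, -⟩ | ⟨p, h, rfl⟩)
        · exact absurd h (by simp)
        · exact absurd h (by simp)
        · obtain rfl : p = i := by injection h with h'; exact h'.symm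
          rfl
      · rintro rfl
        exact Or.inr (Or.inr ⟨i, rfl, rfl⟩)
    apply le_antisymm
    · rw [nbhdIdeal, Ideal.span_le]
      rintro x ⟨v, rfl⟩
      cases v with
      | inl i =>
        refine prod_dvd_mem i _ ?_ ?_ (Ideal.subset_span (hfmem i))
        · simp only [Set.mem_toFinset]
          exact Set.mem_insert _ _
        · simp only [Set.mem_toFinset]
          exact Set.mem_insert_iff.2 (Or.inr (Or.inr (Or.inl ⟨i, rfl, rfl⟩)))
      | inr i =>
        refine prod_dvd_mem i _ ?_ ?_ (Ideal.subset_span (hfmem i))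
        · simp only [Set.mem_toFinset]
          exact Set.mem_insert_iff.2 (Or.inr ((hadj i _).2 rfl))
        · simp only [Set.mem_toFinset]
          exact Set.mem_insert _ _
    · rw [Ideal.span_le]
      rintro x hx
      obtain ⟨i, -, rfl⟩ := List.mem_map.1 hx
      refine Ideal.subset_span ⟨Sum.inr i, ?_⟩
      refine (prod_eq_pair i _ fun a => ?_).symm
      simp only [Set.mem_toFinset, Set.mem_insert_iff, Set.mem_setOf_eq, hadj i a]
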